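/- Let f: ℝ^n → ℝ be L-smooth and 1-weakly-quasi-convex with minimizer x*. Let (x^k), (y^k) be generated by Algorithm AGMsDR, so that f(x^{k+1}) ≤ f(y^k) − (1/(2L))‖∇f(y^k)‖₂², f(y^k) ≤ f(x^k), and f(x^k) − f(x*) ≤ 4L·V(x*, x^0)/k² for all k. Then after N steps, min_{⌈N/2⌉ ≤ k ≤ N} ‖∇f(y^k)‖₂² ≤ 64 L² V(x*, x^0)/N³, where V(x*, x^0) = (1/2)‖x* − x^0‖₂². -/
import Mathlib


open scoped RealInnerProductSpace

/-- (First half of Theorem 3 of the paper.) For an `L`-smooth,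
`1`-weakly-quasi-convex `f` with minimizer `x*`, the AGMsDR guarantees
`f (x (k+1)) ≤ f (y k) - (1/(2L))‖∇f (y k)‖²`, `f (y k) ≤ f (x k)` and
`f (x k) - f x* ≤ 4 L V(x*, x⁰)/k²` imply that after `N` steps
`min_{⌈N/2⌉ ≤ k ≤ N} ‖∇f (y k)‖² ≤ 64 L² V(x*, x⁰) / N³`,
where `V(x*, x⁰) = (1/2)‖x* - x⁰‖²`. -/
theorem stmt_6 (n : ℕ) (L : ℝ) (hL : 0 < L)
    (f : EuclideanSpace ℝ (Fin n) → ℝ)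
    (g : EuclideanSpace ℝ (Fin n) → EuclideanSpace ℝ (Fin n))
    (hdiff : ∀ z, HasGradientAt f (g z) z)
    (hlip : ∀ z w, ‖g z - g w‖ ≤ L * ‖z - w‖)
    (xstar : EuclideanSpace ℝ (Fin n)) (hstar : ∀ z, f xstar ≤ f z)
    (hwqc : ∀ z, f z - f xstar ≤ ⟪g z, z - xstar⟫)
    (x y : ℕ → EuclideanSpace ℝ (Fin n))
    (hdec : ∀ k, f (x (k + 1)) ≤ f (y k) - 1 / (2 * L) * ‖g (y k)‖ ^ 2)
    (hmono : ∀ k, f (y k) ≤ f (x k))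
    (hrate : ∀ k : ℕ, 1 ≤ k →
      f (x k) - f xstar ≤ 4 * L * ((1 / 2) * ‖xstar - x 0‖ ^ 2) / (k : ℝ) ^ 2)
    (N : ℕ) (hN : 0 < N) :
    ∃ k : ℕ, (N + 1) / 2 ≤ k ∧ k ≤ N ∧
      ‖g (y k)‖ ^ 2 ≤ 64 * L ^ 2 * ((1 / 2) * ‖xstar - x 0‖ ^ 2) / (N : ℝ) ^ 3 := by

  set V : ℝ := (1 / 2) * ‖xstar - x 0‖ ^ 2 with hV
  set B : ℝ := 64 * L ^ 2 * V / (N : ℝ) ^ 3 with hB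
  by_contra hcon
  push_neg at hcon
  set m : ℕ := (N + 1) / 2 with hm
  have hm1 : 1 ≤ m := by omega
  have hmN : m ≤ N := by omega
  have h2m : N ≤ 2 * m := by omega
  have h2c : N + 1 ≤ 2 * (N + 1 - m) := by omega
  -- each step decreases f(x k) by at least (1/(2L))‖g (y k)‖²
  have step : ∀ k, f (x (k + 1)) + 1 / (2 * L) * ‖g (y k)‖ ^ 2 ≤ f (x k) := by
    intro k
    have h1 := hdec k
    have h2 := hmono k
    linarith
  -- telescoping
  have tele : ∀ j : ℕ, f (x (m + j + 1)) +
      ∑ k ∈ Finset.Icc m (m + j), 1 / (2 * L) * ‖g (y k)‖ ^ 2 ≤ f (x m) := by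
    intro j
    induction j with
    | zero =>
      simp only [Nat.add_zero, Finset.Icc_self, Finset.sum_singleton]
      exact step m
    | succ j ih =>
      have hle : m ≤ m + j + 1 := by omega
      rw [show m + (j + 1) = (m + j) + 1 from rfl,
        Finset.sum_Icc_succ_top hle]
      have := step (m + j + 1)
      linarith
  have htel := tele (N - m)
  rw [show m + (N - m) = N from by omega] at htel
  -- lower bound on the sum
  have hVpos : (0:ℝ) ≤ V := by positivity
  have hBL : ∀ k ∈ Finset.Icc m N, B / (2 * L) < 1 / (2 * L) * ‖g (y k)‖ ^ 2 := by
    intro k hk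
    rw [Finset.mem_Icc] at hk
    rw [show (1:ℝ) / (2 * L) * ‖g (y k)‖ ^ 2 = ‖g (y k)‖ ^ 2 / (2 * L) from by ring]
    gcongr
    exact hcon k hk.1 hk.2
  have hne : (Finset.Icc m N).Nonempty := Finset.nonempty_Icc.mpr hmN
  have hsum : ∑ k ∈ Finset.Icc m N, (B / (2 * L)) <
      ∑ k ∈ Finset.Icc m N, 1 / (2 * L) * ‖g (y k)‖ ^ 2 :=
    Finset.sum_lt_sum_of_nonempty hne hBL
  rw [Finset.sum_const, Nat.card_Icc] at hsum
  have hcard : ((N + 1 - m : ℕ) : ℝ) • (B / (2 * L)) =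
      ((N + 1 - m : ℕ) : ℝ) * (B / (2 * L)) := by simp
  rw [nsmul_eq_mul] at hsum
  -- combine
  have hrm := hrate m hm1
  have hfs := hstar (x (N + 1))
  have hmain : ((N + 1 - m : ℕ) : ℝ) * (B / (2 * L)) < 4 * L * V / (m : ℝ) ^ 2 := by
    calc ((N + 1 - m : ℕ) : ℝ) * (B / (2 * L))
        < ∑ k ∈ Finset.Icc m N, 1 / (2 * L) * ‖g (y k)‖ ^ 2 := hsum
      _ ≤ f (x m) - f (x (N + 1)) := by linarith
      _ ≤ f (x m) - f xstar := by linarith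
      _ ≤ 4 * L * V / (m : ℝ) ^ 2 := hrm
  -- arithmetic contradiction: 8 * (N+1-m) * m^2 ≥ N^3
  have hnat : (N:ℝ) ^ 3 ≤ 8 * ((N + 1 - m : ℕ) : ℝ) * (m : ℝ) ^ 2 := by
    have c1 : (N : ℝ) ≤ 2 * (m : ℝ) := by exact_mod_cast h2m
    have c2 : (N : ℝ) + 1 ≤ 2 * ((N + 1 - m : ℕ) : ℝ) := by
      have : ((N + 1 : ℕ) : ℝ) ≤ ((2 * (N + 1 - m) : ℕ) : ℝ) := by exact_mod_cast h2c
      push_cast at this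
      linarith
    have hN0 : (0:ℝ) ≤ (N:ℝ) := Nat.cast_nonneg N
    nlinarith [sq_nonneg ((N:ℝ) - 2*m), mul_nonneg hN0 hN0]
  have hNpos : (0:ℝ) < (N:ℝ) ^ 3 := by
    have : (0:ℝ) < (N:ℝ) := by exact_mod_cast hN
    positivity
  have hmpos : (0:ℝ) < (m : ℝ) ^ 2 := by
    have : (0:ℝ) < (m:ℝ) := by exact_mod_cast hm1
    positivity
  set c : ℝ := ((N + 1 - m : ℕ) : ℝ) with hc
  have e : c * (B / (2 * L)) = 32 * L * V * c / (N : ℝ) ^ 3 := by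
    rw [hB]; field_simp; ring
  rw [e, div_lt_div_iff₀ hNpos hmpos] at hmain
  have h8 : V * (N : ℝ) ^ 3 ≤ V * (8 * c * (m : ℝ) ^ 2) :=
    mul_le_mul_of_nonneg_left (by linarith [hnat]) hVpos
  have h9 := mul_le_mul_of_nonneg_left h8 (by positivity : (0:ℝ) ≤ 4 * L)
  linarith [hmain, h9]
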